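/- Let x₁, …, x_n be pairwise distinct real numbers and let (c₁, s₁), …, (c_n, s_n) be points of the unit circle in ℝ² (so cᵢ² + sᵢ² = 1 for each i). Then there exist real polynomials p, q, s such that s(x) ≠ 0 for every real x, p(x)² + q(x)² = s(x)² for every real x, and for each i one has p(xᵢ) = cᵢ·s(xᵢ) and q(xᵢ) = sᵢ·s(xᵢ). (Equivalently: there is a rational map from ℝ to the unit circle, given by quotients of polynomials whose common denominator has no real zero, taking prescribed circle values at the finitely many prescribed points.) -/

import Mathlib

private lemma tan_half_aux (C S : ℝ) (hCS : C ^ 2 + S ^ 2 = 1) (h : 1 + C ≠ 0) :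
    1 - (S / (1 + C)) ^ 2 = C * (1 + (S / (1 + C)) ^ 2) ∧
    2 * (S / (1 + C)) = S * (1 + (S / (1 + C)) ^ 2) := by
  constructor
  · field_simp
    nlinarith [hCS]
  · field_simp
    linear_combination (-S * (1 + C) + S * C) * hCS

/-- Circle-valued polynomial interpolation: given distinct real points `x i` and
prescribed unit-circle values `(c i, s i)`, there are real polynomials `p, q, d`
with `d` nowhere vanishing on `ℝ`, `p² + q² = d²` pointwise on `ℝ`, and
`p(xᵢ) = cᵢ·d(xᵢ)`, `q(xᵢ) = sᵢ·d(xᵢ)` for each `i`. -/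
theorem circle_interpolation (n : ℕ) (x c s : Fin n → ℝ)
    (hx : Function.Injective x)
    (hcs : ∀ i, c i ^ 2 + s i ^ 2 = 1) :
    ∃ p q d : Polynomial ℝ,
      (∀ t : ℝ, d.eval t ≠ 0) ∧
      (∀ t : ℝ, p.eval t ^ 2 + q.eval t ^ 2 = d.eval t ^ 2) ∧
      (∀ i, p.eval (x i) = c i * d.eval (x i) ∧ q.eval (x i) = s i * d.eval (x i)) := by
  classical
  -- choose a rotation (a,b) on the circle avoiding all antipodes of (c i, s i)
  obtain ⟨u, hu⟩ := Infinite.exists_notMem_finset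
    (Finset.univ.image fun i => -(s i) / (1 - c i))
  have hu2 : (1 : ℝ) + u ^ 2 > 0 := by positivity
  set a : ℝ := (1 - u ^ 2) / (1 + u ^ 2) with ha
  set b : ℝ := 2 * u / (1 + u ^ 2) with hb
  have hab : a ^ 2 + b ^ 2 = 1 := by
    rw [ha, hb]; field_simp; ring
  have h1 : ∀ i, 1 + (a * c i + b * s i) ≠ 0 := by
    intro i h
    have hc : c i = -a ∧ s i = -b := by
      constructor <;> nlinarith [hcs i, sq_nonneg (a + c i), sq_nonneg (b + s i)]
    have h1a : (1 : ℝ) - c i = 1 + a := by rw [hc.1]; ring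
    have h1a' : (1 : ℝ) + a ≠ 0 := by
      have h2 : (1 : ℝ) + a = 2 / (1 + u ^ 2) := by
        rw [ha]; field_simp; norm_num
      rw [h2]; positivity
    have : -(s i) / (1 - c i) = u := by
      rw [hc.2, h1a, ha, hb]
      rw [div_eq_iff (by rw [ha] at h1a'; exact h1a')]
      field_simp
      ring
    exact hu (Finset.mem_image.mpr ⟨i, Finset.mem_univ i, this⟩)
  have hcs' : ∀ i, (a * c i + b * s i) ^ 2 + (a * s i - b * c i) ^ 2 = 1 := by
    intro i
    nlinarith [hcs i, hab]
  set r : Polynomial ℝ :=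
    Lagrange.interpolate Finset.univ x
      (fun i => (a * s i - b * c i) / (1 + (a * c i + b * s i))) with hrdef
  have hr : ∀ i, r.eval (x i)
      = (a * s i - b * c i) / (1 + (a * c i + b * s i)) := fun i =>
    Lagrange.eval_interpolate_at_node _ hx.injOn (Finset.mem_univ i)
  refine ⟨Polynomial.C a * (1 - r ^ 2) - Polynomial.C b * (2 * r),
          Polynomial.C b * (1 - r ^ 2) + Polynomial.C a * (2 * r),
          1 + r ^ 2, ?_, ?_, ?_⟩
  · intro z
    simp only [Polynomial.eval_add, Polynomial.eval_one, Polynomial.eval_pow]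
    positivity
  · intro z
    simp only [Polynomial.eval_add, Polynomial.eval_sub, Polynomial.eval_mul,
      Polynomial.eval_one, Polynomial.eval_pow, Polynomial.eval_C,
      Polynomial.eval_ofNat]
    set R := r.eval z
    linear_combination (1 + R ^ 2) ^ 2 * hab
  · intro i
    have hR := hr i
    obtain ⟨hC, hS⟩ := tan_half_aux (a * c i + b * s i) (a * s i - b * c i)
      (hcs' i) (h1 i)
    simp only [Polynomial.eval_add, Polynomial.eval_sub, Polynomial.eval_mul,
      Polynomial.eval_one, Polynomial.eval_pow, Polynomial.eval_C,
      Polynomial.eval_ofNat, hR]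
    set T := (a * s i - b * c i) / (1 + (a * c i + b * s i)) with hT
    constructor
    · linear_combination a * hC - b * hS + c i * (1 + T ^ 2) * hab
    · linear_combination b * hC + a * hS + s i * (1 + T ^ 2) * hab
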